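/- Let n, m ≥ 1 and α, β > 0. Suppose s_{t₁,t₂} satisfies the bi-parameter Hölder condition: |s_{t₁,t₂}(x,y) − s_{t₁,t₂}(x,(y₁,y₂')) − s_{t₁,t₂}(x,(y₁',y₂)) + s_{t₁,t₂}(x,(y₁',y₂'))| ≤ C₀ |y₁−y₁'|^α/(t₁+|x₁−y₁|)^{n+α} · |y₂−y₂'|^β/(t₂+|x₂−y₂|)^{m+β} whenever |y₁−y₁'| < t₁/2 and |y₂−y₂'| < t₂/2. Let a be supported in I×J (cubes with centers z₁, z₂, side lengths l_I, l_J) with ∫_I a(y₁,y₂)dy₁ = 0 for all y₂ and ∫_J a(y₁,y₂)dy₂ = 0 for all y₁, and ‖a‖_{L¹} ≤ 1. Then for all x = (x₁,x₂) with x₁ ∉ γI, x₂ ∉ γJ (γ ≥ 2) and all (t₁,t₂) with t₁ ≥ |x₁−z₁| and t₂ ≥ |x₂−z₂|: |θ_{t₁,t₂}a(x)| ≤ C C₀ l_I^α l_J^β t₁^{-n-α} t₂^{-m-β}, where θ_{t₁,t₂}a(x) = ∫∫ s_{t₁,t₂}(x,y)a(y)dy and C depends only on n, m, α, β. -/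

import Mathlib

open MeasureTheory Real Set

noncomputable section

/-- The axis-parallel cube with center `z` and side length `l`. -/
def cube {n : ℕ} (z : EuclideanSpace ℝ (Fin n)) (l : ℝ) : Set (EuclideanSpace ℝ (Fin n)) :=
  {y | ∀ i, |y i - z i| ≤ l / 2}

namespace Stmt16

open Filter
open scoped Classical ENNReal NNReal Topology

/-- real clamp -/
def rcl (R r : ℝ) : ℝ := max (-R) (min r R)

lemma rcl_cases (R r : ℝ) (hR : 0 ≤ R) :
    (|r| ≤ R ∧ rcl R r = r) ∨ (R < r ∧ rcl R r = R) ∨ (r < -R ∧ rcl R r = -R) := by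
  rcases le_or_gt r R with h1 | h1
  · rcases le_or_gt (-R) r with h2 | h2
    · left
      refine ⟨abs_le.mpr ⟨h2, h1⟩, ?_⟩
      unfold rcl
      rw [min_eq_left h1, max_eq_right h2]
    · right; right
      refine ⟨h2, ?_⟩
      unfold rcl
      rw [min_eq_left h1, max_eq_left h2.le]
  · right; left
    refine ⟨h1, ?_⟩
    unfold rcl
    rw [min_eq_right h1.le, max_eq_right (by linarith)]

lemma rcl_eq_self {R r : ℝ} (hR : 0 ≤ R) (h : |r| ≤ R) : rcl R r = r := by
  rcases rcl_cases R r hR with ⟨_, h'⟩ | ⟨h', _⟩ | ⟨h', _⟩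
  · exact h'
  · exact absurd h (by rw [abs_le]; push_neg; intro _; linarith)
  · exact absurd h (by rw [abs_le]; push_neg; intro h''; linarith)

lemma abs_rcl_le {R r : ℝ} (hR : 0 ≤ R) : |rcl R r| ≤ R := by
  rcases rcl_cases R r hR with ⟨h, h'⟩ | ⟨h, h'⟩ | ⟨h, h'⟩ <;> rw [h']
  · exact h
  · rw [abs_of_nonneg hR]
  · rw [abs_neg, abs_of_nonneg hR]

lemma rcl_key {R : ℝ} (hR : 0 ≤ R) (r s : ℝ) :
    |r + s - (rcl R r + rcl R s)| ≤ |r + s| := by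
  have f1 := le_abs_self (r + s)
  have f2 := neg_abs_le (r + s)
  have f3 := abs_nonneg (r + s)
  rcases rcl_cases R r hR with ⟨hr, hr'⟩ | ⟨hr, hr'⟩ | ⟨hr, hr'⟩ <;>
    rcases rcl_cases R s hR with ⟨hs, hs'⟩ | ⟨hs, hs'⟩ | ⟨hs, hs'⟩ <;>
    rw [hr', hs'] <;>
    rw [abs_le] <;>
    constructor <;>
    [skip; skip; skip; skip; skip; skip; skip; skip; skip; skip; skip; skip;
     skip; skip; skip; skip; skip; skip] <;>
    first
      | linarith
      | (rcases abs_le.mp hr with ⟨h5, h6⟩; rcases abs_le.mp hs with ⟨h7, h8⟩; linarith)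
      | (rcases abs_le.mp hr with ⟨h5, h6⟩; linarith)
      | (rcases abs_le.mp hs with ⟨h7, h8⟩; linarith)

/-- complex clamp -/
def ccl (R : ℝ) (w : ℂ) : ℂ := Complex.mk (rcl R w.re) (rcl R w.im)

@[simp] lemma ccl_re (R : ℝ) (w : ℂ) : (ccl R w).re = rcl R w.re := rfl
@[simp] lemma ccl_im (R : ℝ) (w : ℂ) : (ccl R w).im = rcl R w.im := rfl

lemma ccl_eq_self {R : ℝ} (hR : 0 ≤ R) {w : ℂ} (h1 : |w.re| ≤ R) (h2 : |w.im| ≤ R) :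
    ccl R w = w := by
  apply Complex.ext
  · simp [rcl_eq_self hR h1]
  · simp [rcl_eq_self hR h2]

lemma norm_ccl_le {R : ℝ} (hR : 0 ≤ R) (w : ℂ) : ‖ccl R w‖ ≤ 2 * R := by
  calc ‖ccl R w‖ ≤ |(ccl R w).re| + |(ccl R w).im| :=
        Complex.norm_le_abs_re_add_abs_im _
    _ ≤ R + R := add_le_add (by simpa using abs_rcl_le hR) (by simpa using abs_rcl_le hR)
    _ = 2 * R := by ring

lemma ccl_key {R : ℝ} (hR : 0 ≤ R) (w₁ w₂ : ℂ) :
    ‖w₁ + w₂ - (ccl R w₁ + ccl R w₂)‖ ≤ 2 * ‖w₁ + w₂‖ := by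
  calc ‖w₁ + w₂ - (ccl R w₁ + ccl R w₂)‖
      ≤ |(w₁ + w₂ - (ccl R w₁ + ccl R w₂)).re| + |(w₁ + w₂ - (ccl R w₁ + ccl R w₂)).im| :=
        Complex.norm_le_abs_re_add_abs_im _
    _ ≤ |(w₁ + w₂).re| + |(w₁ + w₂).im| := by
        have h1 : (w₁ + w₂ - (ccl R w₁ + ccl R w₂)).re
            = w₁.re + w₂.re - (rcl R w₁.re + rcl R w₂.re) := by simp
        have h2 : (w₁ + w₂ - (ccl R w₁ + ccl R w₂)).im
            = w₁.im + w₂.im - (rcl R w₁.im + rcl R w₂.im) := by simp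
        rw [h1, h2]
        have := rcl_key hR w₁.re w₂.re
        have := rcl_key hR w₁.im w₂.im
        simp only [Complex.add_re, Complex.add_im]
        gcongr <;> assumption
    _ ≤ ‖w₁ + w₂‖ + ‖w₁ + w₂‖ := by
        exact add_le_add (Complex.abs_re_le_norm _) (Complex.abs_im_le_norm _)
    _ = 2 * ‖w₁ + w₂‖ := by ring

lemma measurable_rcl (R : ℝ) : Measurable (rcl R) := by
  unfold rcl
  exact measurable_const.max (measurable_id.min measurable_const)

lemma measurable_ccl {W : Type*} [MeasurableSpace W] {f : W → ℂ} (hf : Measurable f) (R : ℝ) :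
    Measurable (fun w => ccl R (f w)) := by
  have : (fun w => ccl R (f w))
      = fun w => ((rcl R (f w).re : ℝ) : ℂ) + ((rcl R (f w).im : ℝ) : ℂ) * Complex.I := by
    funext w
    apply Complex.ext <;> simp
  rw [this]
  apply Measurable.add
  · exact Complex.measurable_ofReal.comp ((measurable_rcl R).comp (Complex.measurable_re.comp hf))
  · exact (Complex.measurable_ofReal.comp
      ((measurable_rcl R).comp (Complex.measurable_im.comp hf))).mul_const _


/-- countable piecewise definition is measurable -/
lemma measurable_dfind {X : Type*} [MeasurableSpace X] (A : ℕ → Set X)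
    (hA : ∀ k, MeasurableSet (A k)) (φ : ℕ → X → ℂ) (hφ : ∀ k, Measurable (φ k)) :
    Measurable (fun x => if hx : ∃ k, x ∈ A k then φ (Nat.find hx) x else 0) := by
  intro E hE
  have : (fun x => if hx : ∃ k, x ∈ A k then φ (Nat.find hx) x else 0) ⁻¹' E
      = (⋃ k, ((A k \ ⋃ j ∈ Finset.range k, A j) ∩ (φ k) ⁻¹' E)) ∪
        (((⋃ k, A k)ᶜ) ∩ (if (0 : ℂ) ∈ E then univ else ∅)) := by
    ext x
    constructor
    · intro hx
      simp only [mem_preimage] at hx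
      by_cases h : ∃ k, x ∈ A k
      · rw [dif_pos h] at hx
        left
        refine mem_iUnion.mpr ⟨Nat.find h, ⟨⟨Nat.find_spec h, ?_⟩, hx⟩⟩
        simp only [Finset.mem_range, mem_iUnion, not_exists, exists_prop]
        intro j hj
        exact Nat.find_min h hj.1 hj.2
      · rw [dif_neg h] at hx
        right
        constructor
        · simpa using h
        · simp [hx]
    · intro hx
      simp only [mem_preimage]
      rcases hx with hx | hx
      · rcases mem_iUnion.mp hx with ⟨k, ⟨⟨hk1, hk2⟩, hk3⟩⟩
        have h : ∃ k, x ∈ A k := ⟨k, hk1⟩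
        rw [dif_pos h]
        have hnomem : ∀ j < k, x ∉ A j := by
          intro j hj
          intro hmem
          apply hk2
          simp only [Finset.mem_range, mem_iUnion, exists_prop]
          exact ⟨j, hj, hmem⟩
        have : Nat.find h = k := by
          apply le_antisymm
          · exact Nat.find_le hk1
          · by_contra hcon
            push_neg at hcon
            exact hnomem _ hcon (Nat.find_spec h)
        rw [this]
        exact hk3
      · rcases hx with ⟨hx1, hx2⟩
        have h : ¬ ∃ k, x ∈ A k := by simpa using hx1
        rw [dif_neg h]
        by_cases h0 : (0 : ℂ) ∈ E
        · exact h0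
        · simp [h0] at hx2
  rw [this]
  apply MeasurableSet.union
  · exact MeasurableSet.iUnion fun k =>
      (((hA k).diff (MeasurableSet.biUnion (Finset.range k).countable_toSet
        (fun j _ => hA j))).inter (hφ k hE))
  · refine (MeasurableSet.compl (MeasurableSet.iUnion hA)).inter ?_
    by_cases h0 : (0 : ℂ) ∈ E <;> simp [h0]

/-- essential union: a countable subfamily of sections almost covers every section -/
lemma exists_ess_union {X Y : Type*} [MeasurableSpace X] [Nonempty Y] (μ : Measure X)
    (S : Y → Set X) (hS : ∀ y, MeasurableSet (S y)) (B : Set X) (hB : ∀ y, S y ⊆ B)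
    (hfin : μ B ≠ ⊤) :
    ∃ Q : ℕ → Y, ∀ y, μ (S y \ ⋃ k, S (Q k)) = 0 := by
  set σ : ℝ≥0∞ := ⨆ Q : ℕ → Y, μ (⋃ k, S (Q k)) with hσdef
  have hσ_le : σ ≤ μ B := by
    apply iSup_le
    intro Q
    exact measure_mono (iUnion_subset fun k => hB (Q k))
  have hσ_ne_top : σ ≠ ⊤ := fun h => hfin (top_le_iff.mp (h ▸ hσ_le))
  have hex : ∀ j : ℕ, ∃ Q : ℕ → Y, σ - (1 : ℝ≥0∞) / (j + 1) ≤ μ (⋃ k, S (Q k)) := by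
    intro j
    rcases eq_or_ne σ 0 with h0 | h0
    · exact ⟨fun _ => Classical.arbitrary Y, by simp [h0]⟩
    · have hlt : σ - (1 : ℝ≥0∞) / (j + 1) < σ := by
        apply ENNReal.sub_lt_self hσ_ne_top h0
        simp
      rcases lt_iSup_iff.mp hlt with ⟨Q, hQ⟩
      exact ⟨Q, hQ.le⟩
  choose Q' hQ' using hex
  set Q : ℕ → Y := fun k => Q' (Nat.unpair k).1 (Nat.unpair k).2 with hQdef
  set U : Set X := ⋃ k, S (Q k) with hUdef
  have hUmeas : MeasurableSet U := MeasurableSet.iUnion fun k => hS (Q k)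
  have hUsub : ∀ j i, S (Q' j i) ⊆ U := by
    intro j i x hx
    exact mem_iUnion.mpr ⟨Nat.pair j i, by simpa [hQdef, Nat.unpair_pair] using hx⟩
  have hμU_le : μ U ≤ σ := le_iSup (fun Q : ℕ → Y => μ (⋃ k, S (Q k))) Q
  have hμU_ge : σ ≤ μ U := by
    apply ENNReal.le_of_forall_pos_le_add
    intro ε hε _
    obtain ⟨j, hj⟩ : ∃ j : ℕ, (1 : ℝ≥0∞) / (j + 1) ≤ ε := by
      rcases ENNReal.exists_inv_nat_lt (by simpa using hε.ne' : (ε : ℝ≥0∞) ≠ 0) with ⟨j, hj⟩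
      refine ⟨j, ?_⟩
      rw [ENNReal.div_eq_inv_mul, mul_one]
      calc ((j : ℝ≥0∞) + 1)⁻¹ ≤ ((j : ℝ≥0∞))⁻¹ := by
            apply ENNReal.inv_le_inv.mpr
            exact le_add_of_nonneg_right zero_le_one
        _ ≤ ε := hj.le
    have h1 : σ - 1 / ((j : ℝ≥0∞) + 1) ≤ μ U :=
      (hQ' j).trans (measure_mono (iUnion_subset fun i => hUsub j i))
    have h2 : σ ≤ μ U + 1 / ((j : ℝ≥0∞) + 1) := tsub_le_iff_right.mp h1
    exact h2.trans (by gcongr)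
  have hμU_ne_top : μ U ≠ ⊤ := fun h => hσ_ne_top (top_le_iff.mp (h ▸ hμU_le))
  refine ⟨Q, fun y => ?_⟩
  by_contra hne
  have hpos : 0 < μ (S y \ U) := pos_iff_ne_zero.mpr hne
  have hcup : μ (S y ∪ U) ≤ σ := by
    have : S y ∪ U = ⋃ k, S ((fun k => if k = 0 then y else Q (k - 1)) k) := by
      ext x
      simp only [mem_union, mem_iUnion]
      constructor
      · rintro (hx | hx)
        · exact ⟨0, by simpa using hx⟩
        · rcases mem_iUnion.mp hx with ⟨k, hk⟩
          exact ⟨k + 1, by simpa using hk⟩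
      · rintro ⟨k, hk⟩
        by_cases h0 : k = 0
        · left; simpa [h0] using hk
        · right
          rw [if_neg h0] at hk
          exact mem_iUnion.mpr ⟨k - 1, hk⟩
    rw [this]
    exact le_iSup (fun Q : ℕ → Y => μ (⋃ k, S (Q k))) _
  have hdecomp : μ (S y \ U) + μ U = μ (S y ∪ U) := by
    rw [← measure_union (disjoint_sdiff_left) hUmeas]
    congr 1
    ext x
    simp only [mem_union, mem_diff]
    tauto
  have : μ U < μ (S y \ U) + μ U := by
    rw [add_comm]
    exact ENNReal.lt_add_right hμU_ne_top hne
  rw [hdecomp] at this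
  exact absurd (hcup.trans hμU_ge) (not_le.mpr this)


variable {X Y : Type*} [MeasureSpace X] [MeasureSpace Y]
    [SigmaFinite (volume : Measure X)] [SigmaFinite (volume : Measure Y)]


/-- Fubini kill: bounded measurable function of the first variable against a function whose
   second-variable slice integrals vanish -/
lemma integral_fst_mul_eq_zero (φ : X → ℂ) (hφm : Measurable φ) (Cb : ℝ)
    (hφb : ∀ x, ‖φ x‖ ≤ Cb) (b : X × Y → ℂ) (hb : Integrable b)
    (hslice : ∀ᵐ x : X, (∫ y, b (x, y)) = 0) :
    ∫ p : X × Y, φ p.1 * b p = 0 := by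
  have hFm : AEStronglyMeasurable (fun p : X × Y => φ p.1 * b p) volume :=
    ((hφm.comp measurable_fst).aestronglyMeasurable).mul hb.1
  have hFi : Integrable (fun p : X × Y => φ p.1 * b p) := by
    apply Integrable.mono' (hb.norm.const_mul Cb) hFm
    filter_upwards with p
    rw [norm_mul]
    exact mul_le_mul_of_nonneg_right (hφb p.1) (norm_nonneg _)
  rw [Measure.volume_eq_prod] at hFi ⊢
  rw [integral_prod _ hFi]
  have : ∀ᵐ x : X, (∫ y, φ x * b (x, y)) = 0 := by
    filter_upwards [hslice] with x hx
    rw [integral_const_mul, hx, mul_zero]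
  rw [integral_congr_ae this, integral_zero]

lemma integral_snd_mul_eq_zero (ψ : Y → ℂ) (hψm : Measurable ψ) (Cb : ℝ)
    (hψb : ∀ y, ‖ψ y‖ ≤ Cb) (b : X × Y → ℂ) (hb : Integrable b)
    (hslice : ∀ᵐ y : Y, (∫ x, b (x, y)) = 0) :
    ∫ p : X × Y, ψ p.2 * b p = 0 := by
  have hFm : AEStronglyMeasurable (fun p : X × Y => ψ p.2 * b p) volume :=
    ((hψm.comp measurable_snd).aestronglyMeasurable).mul hb.1
  have hFi : Integrable (fun p : X × Y => ψ p.2 * b p) := by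
    apply Integrable.mono' (hb.norm.const_mul Cb) hFm
    filter_upwards with p
    rw [norm_mul]
    exact mul_le_mul_of_nonneg_right (hψb p.2) (norm_nonneg _)
  rw [Measure.volume_eq_prod] at hFi ⊢
  rw [integral_prod_symm _ hFi]
  have : ∀ᵐ y : Y, (∫ x, ψ y * b (x, y)) = 0 := by
    filter_upwards [hslice] with y hy
    rw [integral_const_mul, hy, mul_zero]
  rw [integral_congr_ae this, integral_zero]

/-- integral of an integrable separable multiple of a doubly cancellative function vanishes -/
lemma integral_sep_mul_eq_zero (c : X → ℂ) (d : Y → ℂ) (hc : Measurable c) (hd : Measurable d)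
    (b : X × Y → ℂ) (hb : Integrable b)
    (h1 : ∀ᵐ x : X, (∫ y, b (x, y)) = 0) (h2 : ∀ᵐ y : Y, (∫ x, b (x, y)) = 0)
    (hk : Integrable (fun p : X × Y => (c p.1 + d p.2) * b p)) :
    ∫ p : X × Y, (c p.1 + d p.2) * b p = 0 := by
  set k : X × Y → ℂ := fun p => (c p.1 + d p.2) * b p with hkdef
  set F : ℕ → X × Y → ℂ :=
    fun j p => (ccl (j : ℝ) (c p.1) + ccl (j : ℝ) (d p.2)) * b p with hFdef
  have hFint0 : ∀ j : ℕ, Integrable (fun p : X × Y => ccl (j : ℝ) (c p.1) * b p) := by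
    intro j
    have hm0 : AEStronglyMeasurable (fun p : X × Y => ccl (j : ℝ) (c p.1) * b p) volume :=
      (((measurable_ccl hc _).comp measurable_fst).aestronglyMeasurable).mul hb.1
    apply Integrable.mono' (hb.norm.const_mul (2 * j)) hm0
    filter_upwards with p
    rw [norm_mul]
    exact mul_le_mul_of_nonneg_right (norm_ccl_le (by positivity) _) (norm_nonneg _)
  have hFint1 : ∀ j : ℕ, Integrable (fun p : X × Y => ccl (j : ℝ) (d p.2) * b p) := by
    intro j
    have hm1 : AEStronglyMeasurable (fun p : X × Y => ccl (j : ℝ) (d p.2) * b p) volume :=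
      (((measurable_ccl hd _).comp measurable_snd).aestronglyMeasurable).mul hb.1
    apply Integrable.mono' (hb.norm.const_mul (2 * j)) hm1
    filter_upwards with p
    rw [norm_mul]
    exact mul_le_mul_of_nonneg_right (norm_ccl_le (by positivity) _) (norm_nonneg _)
  have hFzero : ∀ j : ℕ, (∫ p : X × Y, F j p) = 0 := by
    intro j
    have hsplit : (∫ p : X × Y, F j p)
        = (∫ p : X × Y, ccl (j : ℝ) (c p.1) * b p)
          + ∫ p : X × Y, ccl (j : ℝ) (d p.2) * b p := by
      rw [← integral_add (hFint0 j) (hFint1 j)]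
      apply integral_congr_ae
      filter_upwards with p
      rw [hFdef]
      ring
    rw [hsplit]
    rw [integral_fst_mul_eq_zero (fun x => ccl (j : ℝ) (c x)) (measurable_ccl hc _)
        (2 * j) (fun x => norm_ccl_le (by positivity) _) b hb h1]
    rw [integral_snd_mul_eq_zero (fun y => ccl (j : ℝ) (d y)) (measurable_ccl hd _)
        (2 * j) (fun y => norm_ccl_le (by positivity) _) b hb h2]
    ring
  have hTend : Tendsto (fun j : ℕ => ∫ p : X × Y, F j p) atTop (𝓝 (∫ p : X × Y, k p)) := by
    apply tendsto_integral_of_dominated_convergence (fun p => 3 * ‖k p‖)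
    · intro j
      have hmj : AEStronglyMeasurable (F j) volume :=
        ((((measurable_ccl hc _).comp measurable_fst).add
          ((measurable_ccl hd _).comp measurable_snd)).aestronglyMeasurable).mul hb.1
      exact hmj
    · exact hk.norm.const_mul 3
    · intro j
      filter_upwards with p
      have hdiff : ‖k p - F j p‖ ≤ 2 * ‖k p‖ := by
        have : k p - F j p
            = (c p.1 + d p.2 - (ccl (j : ℝ) (c p.1) + ccl (j : ℝ) (d p.2))) * b p := by
          rw [hkdef, hFdef]; ring
        rw [this, norm_mul]
        calc ‖c p.1 + d p.2 - (ccl (j : ℝ) (c p.1) + ccl (j : ℝ) (d p.2))‖ * ‖b p‖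
            ≤ (2 * ‖c p.1 + d p.2‖) * ‖b p‖ :=
              mul_le_mul_of_nonneg_right (ccl_key (by positivity) _ _) (norm_nonneg _)
          _ = 2 * ‖k p‖ := by rw [hkdef]; rw [norm_mul]; ring
      calc ‖F j p‖ = ‖k p - (k p - F j p)‖ := by ring_nf
        _ ≤ ‖k p‖ + ‖k p - F j p‖ := norm_sub_le _ _
        _ ≤ ‖k p‖ + 2 * ‖k p‖ := by linarith
        _ = 3 * ‖k p‖ := by ring
    · filter_upwards with p
      apply Tendsto.congr' _ tendsto_const_nhds
      rw [EventuallyEq, eventually_atTop]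
      refine ⟨Nat.ceil (max (max |(c p.1).re| |(c p.1).im|) (max |(d p.2).re| |(d p.2).im|)), ?_⟩
      intro j hj
      have hj' : max (max |(c p.1).re| |(c p.1).im|) (max |(d p.2).re| |(d p.2).im|) ≤ (j : ℝ) :=
        (Nat.ceil_le.mp hj)
      have h0j : (0 : ℝ) ≤ j := Nat.cast_nonneg j
      rw [hkdef, hFdef]
      simp only
      rw [ccl_eq_self h0j (le_trans (le_max_left _ _) (le_trans (le_max_left _ _) hj'))
          (le_trans (le_max_right _ _) (le_trans (le_max_left _ _) hj')),
        ccl_eq_self h0j (le_trans (le_max_left _ _) (le_trans (le_max_right _ _) hj'))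
          (le_trans (le_max_right _ _) (le_trans (le_max_right _ _) hj'))]
  have h0 : Tendsto (fun j : ℕ => ∫ p : X × Y, F j p) atTop (𝓝 0) := by
    have heq : (fun j : ℕ => ∫ p : X × Y, F j p) = fun _ => (0 : ℂ) := funext hFzero
    rw [heq]
    exact tendsto_const_nhds
  exact tendsto_nhds_unique hTend h0


/-- measurable approximate separable decomposition -/
lemma exists_sep_approx {X Y : Type*} [MeasureSpace X] [MeasureSpace Y]
    [SigmaFinite (volume : Measure X)] [SigmaFinite (volume : Measure Y)]
    [Nonempty X] [Nonempty Y]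
    (Ω : Set (X × Y)) (hΩ : MeasurableSet Ω)
    (BX : Set X) (BY : Set Y) (hfinX : volume BX ≠ ⊤) (hfinY : volume BY ≠ ⊤)
    (hsub : Ω ⊆ BX ×ˢ BY)
    (u : X × Y → ℂ) (hu : Measurable u)
    (f : X → ℂ) (g : Y → ℂ) (M : ℝ)
    (hfg : ∀ p ∈ Ω, ‖u p - (f p.1 + g p.2)‖ ≤ M) :
    ∃ c : X → ℂ, ∃ d : Y → ℂ, Measurable c ∧ Measurable d ∧
      ∀ᵐ p : X × Y, p ∈ Ω → ‖u p - (c p.1 + d p.2)‖ ≤ 3 * M := by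
  set S : Y → Set X := fun y => {x | (x, y) ∈ Ω} with hSdef
  have hSmeas : ∀ y, MeasurableSet (S y) := fun y => measurable_prodMk_right hΩ
  have hSsub : ∀ y, S y ⊆ BX := fun y x hx => (hsub hx).1
  obtain ⟨Q, hQ⟩ := exists_ess_union (volume : Measure X) S hSmeas BX hSsub hfinX
  set T : X → Set Y := fun x => {y | (x, y) ∈ Ω} with hTdef
  have hTmeas : ∀ x, MeasurableSet (T x) := fun x => measurable_prodMk_left hΩ
  have hTsub : ∀ x, T x ⊆ BY := fun x y hy => (hsub hy).2
  obtain ⟨P, hP⟩ := exists_ess_union (volume : Measure Y) T hTmeas BY hTsub hfinY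
  set US : Set X := ⋃ k, S (Q k) with hUSdef
  set VT : Set Y := ⋃ k, T (P k) with hVTdef
  have hUSmeas : MeasurableSet US := MeasurableSet.iUnion fun k => hSmeas (Q k)
  have hVTmeas : MeasurableSet VT := MeasurableSet.iUnion fun k => hTmeas (P k)
  set c : X → ℂ := fun x =>
    if hx : ∃ k, x ∈ S (Q k) then u (x, Q (Nat.find hx)) - g (Q (Nat.find hx)) else 0 with hcdef
  set d : Y → ℂ := fun y =>
    if hy : ∃ k, y ∈ T (P k) then u (P (Nat.find hy), y) - f (P (Nat.find hy)) else 0 with hddef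
  have hcmeas : Measurable c := by
    apply measurable_dfind (fun k => S (Q k)) (fun k => hSmeas (Q k))
      (fun k x => u (x, Q k) - g (Q k))
    intro k
    exact (hu.comp measurable_prodMk_right).sub measurable_const
  have hdmeas : Measurable d := by
    apply measurable_dfind (fun k => T (P k)) (fun k => hTmeas (P k))
      (fun k y => u (P k, y) - f (P k))
    intro k
    exact (hu.comp measurable_prodMk_left).sub measurable_const
  have hc : ∀ x ∈ US, ‖c x - f x‖ ≤ M := by
    intro x hx
    rcases mem_iUnion.mp hx with ⟨k, hk⟩
    have hex : ∃ k, x ∈ S (Q k) := ⟨k, hk⟩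
    have hmem : (x, Q (Nat.find hex)) ∈ Ω := Nat.find_spec hex
    have := hfg _ hmem
    rw [hcdef]
    simp only [dif_pos hex]
    calc ‖u (x, Q (Nat.find hex)) - g (Q (Nat.find hex)) - f x‖
        = ‖u (x, Q (Nat.find hex)) - (f x + g (Q (Nat.find hex)))‖ := by ring_nf
      _ ≤ M := this
  have hd : ∀ y ∈ VT, ‖d y - g y‖ ≤ M := by
    intro y hy
    rcases mem_iUnion.mp hy with ⟨k, hk⟩
    have hex : ∃ k, y ∈ T (P k) := ⟨k, hk⟩
    have hmem : (P (Nat.find hex), y) ∈ Ω := Nat.find_spec hex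
    have := hfg _ hmem
    rw [hddef]
    simp only [dif_pos hex]
    calc ‖u (P (Nat.find hex), y) - f (P (Nat.find hex)) - g y‖
        = ‖u (P (Nat.find hex), y) - (f (P (Nat.find hex)) + g y)‖ := by ring_nf
      _ ≤ M := this
  -- coverage
  have hbad1 : volume (Ω \ (Prod.fst ⁻¹' US)) = 0 := by
    rw [Measure.volume_eq_prod]
    rw [Measure.prod_apply_symm (hΩ.diff (measurable_fst hUSmeas))]
    have : ∀ y : Y, (fun x => (x, y)) ⁻¹' (Ω \ (Prod.fst ⁻¹' US)) = S y \ US := by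
      intro y
      ext x
      simp [hSdef]
    simp only [this]
    simp only [hQ]
    simp
  have hbad2 : volume (Ω \ (Prod.snd ⁻¹' VT)) = 0 := by
    rw [Measure.volume_eq_prod]
    rw [Measure.prod_apply (hΩ.diff (measurable_snd hVTmeas))]
    have : ∀ x : X, Prod.mk x ⁻¹' (Ω \ (Prod.snd ⁻¹' VT)) = T x \ VT := by
      intro x
      ext y
      simp [hTdef]
    simp only [this]
    simp only [hP]
    simp
  refine ⟨c, d, hcmeas, hdmeas, ?_⟩
  have h1 : ∀ᵐ p : X × Y, p ∉ Ω \ (Prod.fst ⁻¹' US) :=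
    (measure_eq_zero_iff_ae_notMem).mp hbad1
  have h2 : ∀ᵐ p : X × Y, p ∉ Ω \ (Prod.snd ⁻¹' VT) :=
    (measure_eq_zero_iff_ae_notMem).mp hbad2
  filter_upwards [h1, h2] with p hp1 hp2 hpΩ
  have hx : p.1 ∈ US := by
    by_contra hcon
    exact hp1 ⟨hpΩ, hcon⟩
  have hy : p.2 ∈ VT := by
    by_contra hcon
    exact hp2 ⟨hpΩ, hcon⟩
  have key : u p - (c p.1 + d p.2)
      = (u p - (f p.1 + g p.2)) + ((f p.1 - c p.1) + (g p.2 - d p.2)) := by ring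
  calc ‖u p - (c p.1 + d p.2)‖
      ≤ ‖u p - (f p.1 + g p.2)‖ + (‖f p.1 - c p.1‖ + ‖g p.2 - d p.2‖) := by
        rw [key]; exact (norm_add_le _ _).trans (by gcongr; exact norm_add_le _ _)
    _ ≤ M + (M + M) := by
        gcongr
        · exact hfg p hpΩ
        · rw [norm_sub_rev]; exact hc _ hx
        · rw [norm_sub_rev]; exact hd _ hy
    _ = 3 * M := by ring


variable {n m : ℕ}

lemma cube_measurableSet (z : EuclideanSpace ℝ (Fin n)) (l : ℝ) :
    MeasurableSet (cube z l) := by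
  have h : cube z l = ⋂ i, {y : EuclideanSpace ℝ (Fin n) | |y i - z i| ≤ l / 2} := by
    ext y
    simp [cube]
  rw [h]
  refine MeasurableSet.iInter fun i => ?_
  have hmeas : Measurable fun y : EuclideanSpace ℝ (Fin n) => |y i - z i| :=
    (((continuous_apply i).measurable.comp (WithLp.measurable_ofLp 2 (Fin n → ℝ))).sub measurable_const).abs
  exact measurableSet_le hmeas measurable_const

lemma mem_cube_self (z : EuclideanSpace ℝ (Fin n)) {l : ℝ} (hl : 0 ≤ l) : z ∈ cube z l := by
  intro i
  simp only [sub_self, abs_zero]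
  linarith

lemma coord_abs_le_norm (v : EuclideanSpace ℝ (Fin n)) (i : Fin n) : |v i| ≤ ‖v‖ := by
  rw [EuclideanSpace.norm_eq]
  have h1 : |v i| = Real.sqrt (|v i| ^ 2) := by
    rw [Real.sqrt_sq (abs_nonneg _)]
  rw [h1]
  apply Real.sqrt_le_sqrt
  have : |v i| ^ 2 = ‖v i‖ ^ 2 := by rw [Real.norm_eq_abs]
  rw [this]
  exact Finset.single_le_sum (f := fun j => ‖v j‖ ^ 2) (fun j _ => by positivity)
    (Finset.mem_univ i)

lemma norm_sub_le_of_cube {z y y' : EuclideanSpace ℝ (Fin n)} {l : ℝ} (hl : 0 ≤ l)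
    (hy : y ∈ cube z l) (hy' : y' ∈ cube z l) : ‖y - y'‖ ≤ n * l := by
  rw [EuclideanSpace.norm_eq]
  have key : ∀ i, ‖(y - y') i‖ ^ 2 ≤ l ^ 2 := by
    intro i
    have h1 : (y - y') i = y i - y' i := rfl
    rw [Real.norm_eq_abs, h1]
    have h2 : |y i - y' i| ≤ l := by
      have ha := hy i
      have hb := hy' i
      calc |y i - y' i| = |(y i - z i) - (y' i - z i)| := by ring_nf
        _ ≤ |y i - z i| + |y' i - z i| := abs_sub _ _
        _ ≤ l / 2 + l / 2 := by gcongr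
        _ = l := by ring
    have := pow_le_pow_left₀ (abs_nonneg (y i - y' i)) h2 2
    simpa using this
  have hsum : (∑ i, ‖(y - y') i‖ ^ 2) ≤ (n : ℝ) * l ^ 2 := by
    calc (∑ i, ‖(y - y') i‖ ^ 2) ≤ ∑ _i : Fin n, l ^ 2 :=
          Finset.sum_le_sum fun i _ => key i
      _ = (n : ℝ) * l ^ 2 := by
          rw [Finset.sum_const, Finset.card_univ, Fintype.card_fin, nsmul_eq_mul]
  have hn2 : (n : ℝ) * l ^ 2 ≤ ((n : ℝ) * l) ^ 2 := by
    have h1 : (n : ℝ) ≤ (n : ℝ) ^ 2 := by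
      have := Nat.le_self_pow (two_ne_zero) n
      calc (n : ℝ) ≤ ((n ^ 2 : ℕ) : ℝ) := by exact_mod_cast this
        _ = (n : ℝ) ^ 2 := by push_cast; ring
    nlinarith [sq_nonneg l]
  calc Real.sqrt (∑ i, ‖(y - y') i‖ ^ 2) ≤ Real.sqrt (((n : ℝ) * l) ^ 2) :=
        Real.sqrt_le_sqrt (hsum.trans hn2)
    _ = n * l := Real.sqrt_sq (by positivity)

lemma lt_norm_of_not_in_dilate {z x : EuclideanSpace ℝ (Fin n)} {l γ : ℝ} (hl : 0 < l)
    (hγ : 2 ≤ γ) (hx : x ∉ cube z (γ * l)) : l < ‖x - z‖ := by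
  simp only [cube, mem_setOf_eq, not_forall, not_le] at hx
  rcases hx with ⟨i, hi⟩
  have h1 : l ≤ γ * l / 2 := by nlinarith
  have h2 : |(x - z) i| = |x i - z i| := rfl
  have h3 : |x i - z i| ≤ ‖x - z‖ := h2 ▸ coord_abs_le_norm (x - z) i
  linarith

/-- nonnegativity of the Hölder constant -/
lemma C0_nonneg {n m : ℕ} (hn : 1 ≤ n) (hm : 1 ≤ m) {α β : ℝ} (hα : 0 < α) (hβ : 0 < β)
    {C₀ : ℝ}
    {s : ℝ → ℝ → (EuclideanSpace ℝ (Fin n) × EuclideanSpace ℝ (Fin m)) →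
      EuclideanSpace ℝ (Fin n) → EuclideanSpace ℝ (Fin m) → ℂ}
    (hHol : ∀ t₁ t₂ : ℝ, 0 < t₁ → 0 < t₂ →
      ∀ (x : EuclideanSpace ℝ (Fin n) × EuclideanSpace ℝ (Fin m))
        (y₁ y₁' : EuclideanSpace ℝ (Fin n)) (y₂ y₂' : EuclideanSpace ℝ (Fin m)),
      ‖y₁ - y₁'‖ < t₁ / 2 → ‖y₂ - y₂'‖ < t₂ / 2 →
      ‖s t₁ t₂ x y₁ y₂ - s t₁ t₂ x y₁ y₂' - s t₁ t₂ x y₁' y₂ + s t₁ t₂ x y₁' y₂'‖ ≤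
        C₀ * (‖y₁ - y₁'‖ ^ α / (t₁ + ‖x.1 - y₁‖) ^ ((n : ℝ) + α)) *
          (‖y₂ - y₂'‖ ^ β / (t₂ + ‖x.2 - y₂‖) ^ ((m : ℝ) + β))) :
    0 ≤ C₀ := by
  set i0 : Fin n := ⟨0, hn⟩
  set j0 : Fin m := ⟨0, hm⟩
  set v : EuclideanSpace ℝ (Fin n) := EuclideanSpace.single i0 (4⁻¹ : ℝ)
  set w : EuclideanSpace ℝ (Fin m) := EuclideanSpace.single j0 (4⁻¹ : ℝ)
  have hv : ‖(0 : EuclideanSpace ℝ (Fin n)) - v‖ = 4⁻¹ := by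
    rw [zero_sub, norm_neg, EuclideanSpace.norm_single]
    norm_num
  have hw : ‖(0 : EuclideanSpace ℝ (Fin m)) - w‖ = 4⁻¹ := by
    rw [zero_sub, norm_neg, EuclideanSpace.norm_single]
    norm_num
  have key := hHol 1 1 one_pos one_pos (0, 0) 0 v 0 w
    (by rw [hv]; norm_num) (by rw [hw]; norm_num)
  rw [hv, hw] at key
  have hxy1 : ‖(0, (0 : EuclideanSpace ℝ (Fin m))).1 -
      (0 : EuclideanSpace ℝ (Fin n))‖ = 0 := by simp
  have hxy2 : ‖(0, (0 : EuclideanSpace ℝ (Fin m))).2 -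
      (0 : EuclideanSpace ℝ (Fin m))‖ = 0 := by simp
  rw [hxy1, hxy2] at key
  have h1 : ((1 : ℝ) + 0) ^ ((n : ℝ) + α) = 1 := by
    rw [add_zero, Real.one_rpow]
  have h2 : ((1 : ℝ) + 0) ^ ((m : ℝ) + β) = 1 := by
    rw [add_zero, Real.one_rpow]
  rw [h1, h2] at key
  have hp1 : (0 : ℝ) < (4⁻¹ : ℝ) ^ α := Real.rpow_pos_of_pos (by norm_num) _
  have hp2 : (0 : ℝ) < (4⁻¹ : ℝ) ^ β := Real.rpow_pos_of_pos (by norm_num) _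
  have h0 : (0 : ℝ) ≤ C₀ * ((4⁻¹ : ℝ) ^ α / 1) * ((4⁻¹ : ℝ) ^ β / 1) :=
    le_trans (norm_nonneg _) key
  rw [div_one, div_one, mul_assoc] at h0
  by_contra hneg
  push_neg at hneg
  have := mul_neg_of_neg_of_pos hneg (mul_pos hp1 hp2)
  linarith

/-- telescoped double-difference bound on the product of cubes -/
lemma double_diff_bound {α β : ℝ} (hα : 0 < α) (hβ : 0 < β) {C₀ : ℝ} (hC₀ : 0 ≤ C₀)
    (s₀ : EuclideanSpace ℝ (Fin n) → EuclideanSpace ℝ (Fin m) → ℂ)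
    (x₁ : EuclideanSpace ℝ (Fin n)) (x₂ : EuclideanSpace ℝ (Fin m))
    {t₁ t₂ lI lJ : ℝ} (hlI : 0 < lI) (hlJ : 0 < lJ) (ht₁ : lI < t₁) (ht₂ : lJ < t₂)
    (hHol : ∀ (y₁ y₁' : EuclideanSpace ℝ (Fin n)) (y₂ y₂' : EuclideanSpace ℝ (Fin m)),
      ‖y₁ - y₁'‖ < t₁ / 2 → ‖y₂ - y₂'‖ < t₂ / 2 →
      ‖s₀ y₁ y₂ - s₀ y₁ y₂' - s₀ y₁' y₂ + s₀ y₁' y₂'‖ ≤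
        C₀ * (‖y₁ - y₁'‖ ^ α / (t₁ + ‖x₁ - y₁‖) ^ ((n : ℝ) + α)) *
          (‖y₂ - y₂'‖ ^ β / (t₂ + ‖x₂ - y₂‖) ^ ((m : ℝ) + β)))
    {z₁ : EuclideanSpace ℝ (Fin n)} {z₂ : EuclideanSpace ℝ (Fin m)}
    {y₁ y₁' : EuclideanSpace ℝ (Fin n)} {y₂ y₂' : EuclideanSpace ℝ (Fin m)}
    (h1 : y₁ ∈ cube z₁ lI) (h1' : y₁' ∈ cube z₁ lI)
    (h2 : y₂ ∈ cube z₂ lJ) (h2' : y₂' ∈ cube z₂ lJ) :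
    ‖s₀ y₁ y₂ - s₀ y₁ y₂' - s₀ y₁' y₂ + s₀ y₁' y₂'‖ ≤
      ((2 * n + 2) * (2 * m + 2) : ℝ) * C₀ *
        (lI ^ α * t₁ ^ (-(n : ℝ) - α)) * (lJ ^ β * t₂ ^ (-(m : ℝ) - β)) := by
  have ht1pos : 0 < t₁ := hlI.trans ht₁
  have ht2pos : 0 < t₂ := hlJ.trans ht₂
  set N : ℕ := 2 * n + 2 with hNdef
  set K : ℕ := 2 * m + 2 with hKdef
  have hNpos : 0 < (N : ℝ) := by positivity
  have hKpos : 0 < (K : ℝ) := by positivity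
  set p : ℕ → EuclideanSpace ℝ (Fin n) :=
    fun i => y₁' + ((i : ℝ) / (N : ℝ)) • (y₁ - y₁') with hpdef
  set q : ℕ → EuclideanSpace ℝ (Fin m) :=
    fun j => y₂' + ((j : ℝ) / (K : ℝ)) • (y₂ - y₂') with hqdef
  have hpN : p N = y₁ := by
    rw [hpdef]
    simp only [div_self hNpos.ne']
    rw [one_smul]
    abel
  have hp0 : p 0 = y₁' := by
    rw [hpdef]
    simp
  have hqK : q K = y₂ := by
    rw [hqdef]
    simp only [div_self hKpos.ne']
    rw [one_smul]
    abel
  have hq0 : q 0 = y₂' := by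
    rw [hqdef]
    simp
  have hpstep : ∀ i : ℕ, p (i + 1) - p i = ((N : ℝ))⁻¹ • (y₁ - y₁') := by
    intro i
    rw [hpdef]
    simp only
    rw [add_sub_add_left_eq_sub, ← sub_smul]
    congr 1
    push_cast
    field_simp
    ring
  have hqstep : ∀ j : ℕ, q (j + 1) - q j = ((K : ℝ))⁻¹ • (y₂ - y₂') := by
    intro j
    rw [hqdef]
    simp only
    rw [add_sub_add_left_eq_sub, ← sub_smul]
    congr 1
    push_cast
    field_simp
    ring
  have hpnorm : ∀ i : ℕ, ‖p (i + 1) - p i‖ ≤ lI / 2 := by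
    intro i
    rw [hpstep i, norm_smul, Real.norm_eq_abs, abs_inv, abs_of_pos hNpos]
    have hd := norm_sub_le_of_cube hlI.le h1 h1'
    calc ((N : ℝ))⁻¹ * ‖y₁ - y₁'‖ ≤ ((N : ℝ))⁻¹ * ((n : ℝ) * lI) := by
          apply mul_le_mul_of_nonneg_left hd (by positivity)
      _ ≤ lI / 2 := by
          rw [hNdef]
          rw [inv_mul_le_iff₀ (by positivity)]
          push_cast
          nlinarith [Nat.cast_nonneg (α := ℝ) n]
  have hqnorm : ∀ j : ℕ, ‖q (j + 1) - q j‖ ≤ lJ / 2 := by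
    intro j
    rw [hqstep j, norm_smul, Real.norm_eq_abs, abs_inv, abs_of_pos hKpos]
    have hd := norm_sub_le_of_cube hlJ.le h2 h2'
    calc ((K : ℝ))⁻¹ * ‖y₂ - y₂'‖ ≤ ((K : ℝ))⁻¹ * ((m : ℝ) * lJ) := by
          apply mul_le_mul_of_nonneg_left hd (by positivity)
      _ ≤ lJ / 2 := by
          rw [hKdef]
          rw [inv_mul_le_iff₀ (by positivity)]
          push_cast
          nlinarith [Nat.cast_nonneg (α := ℝ) m]
  set T : ℕ → ℕ → ℂ := fun i j => s₀ (p i) (q j) with hTdef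
  set Mt : ℝ := C₀ * (lI ^ α / t₁ ^ ((n : ℝ) + α)) * (lJ ^ β / t₂ ^ ((m : ℝ) + β)) with hMtdef
  have hterm : ∀ i j : ℕ,
      ‖T (i + 1) (j + 1) - T (i + 1) j - T i (j + 1) + T i j‖ ≤ Mt := by
    intro i j
    have hcl1 : ‖p (i + 1) - p i‖ < t₁ / 2 := lt_of_le_of_lt (hpnorm i) (by linarith)
    have hcl2 : ‖q (j + 1) - q j‖ < t₂ / 2 := lt_of_le_of_lt (hqnorm j) (by linarith)
    have hb := hHol (p (i + 1)) (p i) (q (j + 1)) (q j) hcl1 hcl2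
    have heq : s₀ (p (i+1)) (q (j+1)) - s₀ (p (i+1)) (q j) - s₀ (p i) (q (j+1)) + s₀ (p i) (q j)
        = T (i + 1) (j + 1) - T (i + 1) j - T i (j + 1) + T i j := by
      rw [hTdef]
    rw [heq] at hb
    refine hb.trans ?_
    rw [hMtdef]
    have ht1r : (0 : ℝ) < t₁ ^ ((n : ℝ) + α) := Real.rpow_pos_of_pos ht1pos _
    have ht2r : (0 : ℝ) < t₂ ^ ((m : ℝ) + β) := Real.rpow_pos_of_pos ht2pos _
    have hf1 : ‖p (i + 1) - p i‖ ^ α / (t₁ + ‖x₁ - p (i + 1)‖) ^ ((n : ℝ) + α)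
        ≤ lI ^ α / t₁ ^ ((n : ℝ) + α) := by
      apply div_le_div₀ (by positivity)
      · apply Real.rpow_le_rpow (norm_nonneg _) _ hα.le
        exact (hpnorm i).trans (by linarith)
      · exact ht1r
      · apply Real.rpow_le_rpow ht1pos.le _ (by positivity)
        linarith [norm_nonneg (x₁ - p (i + 1))]
    have hf2 : ‖q (j + 1) - q j‖ ^ β / (t₂ + ‖x₂ - q (j + 1)‖) ^ ((m : ℝ) + β)
        ≤ lJ ^ β / t₂ ^ ((m : ℝ) + β) := by
      apply div_le_div₀ (by positivity)
      · apply Real.rpow_le_rpow (norm_nonneg _) _ hβ.le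
        exact (hqnorm j).trans (by linarith)
      · exact ht2r
      · apply Real.rpow_le_rpow ht2pos.le _ (by positivity)
        linarith [norm_nonneg (x₂ - q (j + 1))]
    apply mul_le_mul
    · exact mul_le_mul_of_nonneg_left hf1 hC₀
    · exact hf2
    · positivity
    · positivity
  have htel : s₀ y₁ y₂ - s₀ y₁ y₂' - s₀ y₁' y₂ + s₀ y₁' y₂'
      = ∑ i ∈ Finset.range N, ∑ j ∈ Finset.range K,
          (T (i + 1) (j + 1) - T (i + 1) j - T i (j + 1) + T i j) := by
    have hinner : ∀ i : ℕ, ∑ j ∈ Finset.range K,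
        (T (i + 1) (j + 1) - T (i + 1) j - T i (j + 1) + T i j)
        = (T (i + 1) K - T i K) - (T (i + 1) 0 - T i 0) := by
      intro i
      have := Finset.sum_range_sub (fun j => T (i + 1) j - T i j) K
      rw [← this]
      apply Finset.sum_congr rfl
      intro j _
      ring
    have houter : ∑ i ∈ Finset.range N,
        ((T (i + 1) K - T i K) - (T (i + 1) 0 - T i 0))
        = (T N K - T N 0) - (T 0 K - T 0 0) := by
      have := Finset.sum_range_sub (fun i => T i K - T i 0) N
      rw [← this]
      apply Finset.sum_congr rfl
      intro i _
      ring
    rw [Finset.sum_congr rfl (fun i _ => hinner i), houter, hTdef]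
    simp only [hpN, hp0, hqK, hq0]
    ring
  rw [htel]
  calc ‖∑ i ∈ Finset.range N, ∑ j ∈ Finset.range K,
        (T (i + 1) (j + 1) - T (i + 1) j - T i (j + 1) + T i j)‖
      ≤ ∑ i ∈ Finset.range N, ‖∑ j ∈ Finset.range K,
        (T (i + 1) (j + 1) - T (i + 1) j - T i (j + 1) + T i j)‖ := norm_sum_le _ _
    _ ≤ ∑ i ∈ Finset.range N, ∑ j ∈ Finset.range K,
        ‖T (i + 1) (j + 1) - T (i + 1) j - T i (j + 1) + T i j‖ :=
          Finset.sum_le_sum fun i _ => norm_sum_le _ _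
    _ ≤ ∑ i ∈ Finset.range N, ∑ j ∈ Finset.range K, Mt :=
          Finset.sum_le_sum fun i _ => Finset.sum_le_sum fun j _ => hterm i j
    _ = (N : ℝ) * ((K : ℝ) * Mt) := by
          rw [Finset.sum_const, Finset.card_range, Finset.sum_const, Finset.card_range]
          rw [nsmul_eq_mul, nsmul_eq_mul]
    _ = ((2 * n + 2) * (2 * m + 2) : ℝ) * C₀ *
        (lI ^ α * t₁ ^ (-(n : ℝ) - α)) * (lJ ^ β * t₂ ^ (-(m : ℝ) - β)) := by
          rw [hMtdef]
          have e1 : t₁ ^ (-(n : ℝ) - α) = (t₁ ^ ((n : ℝ) + α))⁻¹ := by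
            rw [show (-(n : ℝ) - α) = -((n : ℝ) + α) by ring, Real.rpow_neg ht1pos.le]
          have e2 : t₂ ^ (-(m : ℝ) - β) = (t₂ ^ ((m : ℝ) + β))⁻¹ := by
            rw [show (-(m : ℝ) - β) = -((m : ℝ) + β) by ring, Real.rpow_neg ht2pos.le]
          rw [e1, e2, hNdef, hKdef]
          push_cast
          field_simp


end Stmt16

open Stmt16 in
theorem stmt16 (n m : ℕ) (hn : 1 ≤ n) (hm : 1 ≤ m) (α β : ℝ) (hα : 0 < α) (hβ : 0 < β) :
    ∃ C > 0, ∀ (C₀ : ℝ)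
      (s : ℝ → ℝ → (EuclideanSpace ℝ (Fin n) × EuclideanSpace ℝ (Fin m)) →
        EuclideanSpace ℝ (Fin n) → EuclideanSpace ℝ (Fin m) → ℂ),
      -- bi-parameter Hölder condition
      (∀ t₁ t₂ : ℝ, 0 < t₁ → 0 < t₂ →
        ∀ (x : EuclideanSpace ℝ (Fin n) × EuclideanSpace ℝ (Fin m))
          (y₁ y₁' : EuclideanSpace ℝ (Fin n)) (y₂ y₂' : EuclideanSpace ℝ (Fin m)),
        ‖y₁ - y₁'‖ < t₁ / 2 → ‖y₂ - y₂'‖ < t₂ / 2 →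
        ‖s t₁ t₂ x y₁ y₂ - s t₁ t₂ x y₁ y₂' - s t₁ t₂ x y₁' y₂ + s t₁ t₂ x y₁' y₂'‖ ≤
          C₀ * (‖y₁ - y₁'‖ ^ α / (t₁ + ‖x.1 - y₁‖) ^ ((n : ℝ) + α)) *
            (‖y₂ - y₂'‖ ^ β / (t₂ + ‖x.2 - y₂‖) ^ ((m : ℝ) + β))) →
      ∀ (lI lJ : ℝ), 0 < lI → 0 < lJ →
      ∀ (z₁ : EuclideanSpace ℝ (Fin n)) (z₂ : EuclideanSpace ℝ (Fin m))
        (a : (EuclideanSpace ℝ (Fin n) × EuclideanSpace ℝ (Fin m)) → ℂ),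
      Integrable a →
      -- support in I × J
      (∀ y : EuclideanSpace ℝ (Fin n) × EuclideanSpace ℝ (Fin m),
        y.1 ∉ cube z₁ lI ∨ y.2 ∉ cube z₂ lJ → a y = 0) →
      -- cancellation in each variable
      (∀ y₂ : EuclideanSpace ℝ (Fin m), (∫ y₁, a (y₁, y₂)) = 0) →
      (∀ y₁ : EuclideanSpace ℝ (Fin n), (∫ y₂, a (y₁, y₂)) = 0) →
      -- L¹ normalization
      (∫ y, ‖a y‖) ≤ 1 →
      ∀ γ : ℝ, 2 ≤ γ →
      ∀ (x : EuclideanSpace ℝ (Fin n) × EuclideanSpace ℝ (Fin m)) (t₁ t₂ : ℝ),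
        x.1 ∉ cube z₁ (γ * lI) → x.2 ∉ cube z₂ (γ * lJ) →
        ‖x.1 - z₁‖ ≤ t₁ → ‖x.2 - z₂‖ ≤ t₂ →
        ‖∫ y, s t₁ t₂ x y.1 y.2 * a y‖ ≤
          C * C₀ * lI ^ α * lJ ^ β * t₁ ^ (-(n : ℝ) - α) * t₂ ^ (-(m : ℝ) - β) := by
  refine ⟨3 * (2 * n + 2) * (2 * m + 2), by positivity, ?_⟩
  intro C₀ s hHol lI lJ hlI hlJ z₁ z₂ a haInt hsupp hcan1 hcan2 hnorm γ hγ x t₁ t₂ hx1 hx2 ht1 ht2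
  have hC₀ : 0 ≤ C₀ := C0_nonneg hn hm hα hβ hHol
  have hlt1 : lI < t₁ := lt_of_lt_of_le (lt_norm_of_not_in_dilate hlI hγ hx1) ht1
  have hlt2 : lJ < t₂ := lt_of_lt_of_le (lt_norm_of_not_in_dilate hlJ hγ hx2) ht2
  have ht1pos : 0 < t₁ := hlI.trans hlt1
  have ht2pos : 0 < t₂ := hlJ.trans hlt2
  have hrp1 : (0 : ℝ) ≤ lI ^ α := Real.rpow_nonneg hlI.le α
  have hrp2 : (0 : ℝ) ≤ lJ ^ β := Real.rpow_nonneg hlJ.le β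
  have hrp3 : (0 : ℝ) ≤ t₁ ^ (-(n : ℝ) - α) := Real.rpow_nonneg ht1pos.le _
  have hrp4 : (0 : ℝ) ≤ t₂ ^ (-(m : ℝ) - β) := Real.rpow_nonneg ht2pos.le _
  have hRHS0 : 0 ≤ (3 * (2 * n + 2) * (2 * m + 2) : ℝ) * C₀ * lI ^ α * lJ ^ β *
      t₁ ^ (-(n : ℝ) - α) * t₂ ^ (-(m : ℝ) - β) := by
    apply mul_nonneg
    apply mul_nonneg
    apply mul_nonneg
    apply mul_nonneg
    apply mul_nonneg
    · positivity
    · exact hC₀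
    · exact hrp1
    · exact hrp2
    · exact hrp3
    · exact hrp4
  by_cases hint : Integrable
      (fun y : EuclideanSpace ℝ (Fin n) × EuclideanSpace ℝ (Fin m) =>
        s t₁ t₂ x y.1 y.2 * a y) volume
  swap
  · rw [integral_undef hint, norm_zero]
    exact hRHS0
  -- measurable representative of a with controlled support
  set IJ : Set (EuclideanSpace ℝ (Fin n) × EuclideanSpace ℝ (Fin m)) :=
    (cube z₁ lI) ×ˢ (cube z₂ lJ) with hIJdef
  have hIJmeas : MeasurableSet IJ :=
    (cube_measurableSet z₁ lI).prod (cube_measurableSet z₂ lJ)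
  have hamMeas : Measurable (haInt.1.mk a) := haInt.1.stronglyMeasurable_mk.measurable
  have hamAe : a =ᵐ[volume] haInt.1.mk a := haInt.1.ae_eq_mk
  set b := IJ.indicator (haInt.1.mk a) with hbdef
  have hbmeas : Measurable b := hamMeas.indicator hIJmeas
  have hab : a =ᵐ[volume] b := by
    filter_upwards [hamAe] with y hy
    rw [hbdef]
    by_cases hmem : y ∈ IJ
    · rw [indicator_of_mem hmem]
      exact hy
    · rw [indicator_of_notMem hmem]
      apply hsupp
      rw [hIJdef] at hmem
      simp only [mem_prod, not_and_or] at hmem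
      exact hmem
  have hbInt : Integrable b := haInt.congr hab
  have hbsupp : ∀ y, b y ≠ 0 → y ∈ IJ := by
    intro y hy
    by_contra h
    rw [hbdef, indicator_of_notMem h] at hy
    exact hy rfl
  -- slice cancellations for b
  have hcanb2 : ∀ᵐ y₁ : EuclideanSpace ℝ (Fin n),
      (∫ y₂, b (y₁, y₂)) = 0 := by
    have hprod : ∀ᵐ z : EuclideanSpace ℝ (Fin n) × EuclideanSpace ℝ (Fin m)
        ∂((volume : Measure (EuclideanSpace ℝ (Fin n))).prod volume), a z = b z := by
      rw [← Measure.volume_eq_prod]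
      exact hab
    filter_upwards [Measure.ae_ae_of_ae_prod hprod] with y₁ h
    have heq : (fun y₂ => a (y₁, y₂)) =ᵐ[volume] fun y₂ => b (y₁, y₂) := h
    rw [← integral_congr_ae heq]
    exact hcan2 y₁
  have hcanb1 : ∀ᵐ y₂ : EuclideanSpace ℝ (Fin m),
      (∫ y₁, b (y₁, y₂)) = 0 := by
    have hswap : ∀ᵐ q : EuclideanSpace ℝ (Fin m) × EuclideanSpace ℝ (Fin n)
        ∂((volume : Measure (EuclideanSpace ℝ (Fin m))).prod volume),
        a q.swap = b q.swap := by
      have hab' : ∀ᵐ z : EuclideanSpace ℝ (Fin n) × EuclideanSpace ℝ (Fin m)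
          ∂((volume : Measure (EuclideanSpace ℝ (Fin n))).prod volume), a z = b z := by
        rw [← Measure.volume_eq_prod]
        exact hab
      exact (Measure.measurePreserving_swap
        (μ := (volume : Measure (EuclideanSpace ℝ (Fin m))))
        (ν := (volume : Measure (EuclideanSpace ℝ (Fin n))))).quasiMeasurePreserving.tendsto_ae.eventually hab'
    filter_upwards [Measure.ae_ae_of_ae_prod hswap] with y₂ h
    have heq : (fun y₁ => a (y₁, y₂)) =ᵐ[volume] fun y₁ => b (y₁, y₂) := h
    rw [← integral_congr_ae heq]
    exact hcan1 y₂
  -- the set where b is non-zero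
  set Ω : Set (EuclideanSpace ℝ (Fin n) × EuclideanSpace ℝ (Fin m)) := {y | b y ≠ 0} with hΩdef
  have hΩmeas : MeasurableSet Ω := by
    have : Ω = b ⁻¹' ({0}ᶜ) := rfl
    rw [this]
    exact hbmeas (measurableSet_singleton 0).compl
  have hΩsub : Ω ⊆ IJ := fun y hy => hbsupp y hy
  -- H and its measurable version
  set H : EuclideanSpace ℝ (Fin n) × EuclideanSpace ℝ (Fin m) → ℂ :=
    fun y => s t₁ t₂ x y.1 y.2 * b y with hHdef
  have hH : (fun y : EuclideanSpace ℝ (Fin n) × EuclideanSpace ℝ (Fin m) =>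
      s t₁ t₂ x y.1 y.2 * a y) =ᵐ[volume] H := by
    filter_upwards [hab] with y hy
    rw [hHdef]
    simp only
    rw [hy]
  have hHInt : Integrable H := hint.congr hH
  rw [integral_congr_ae hH]
  have hmkMeas : Measurable (hHInt.1.mk H) := hHInt.1.stronglyMeasurable_mk.measurable
  have hHmk : H =ᵐ[volume] hHInt.1.mk H := hHInt.1.ae_eq_mk
  set u : EuclideanSpace ℝ (Fin n) × EuclideanSpace ℝ (Fin m) → ℂ :=
    fun y => if b y = 0 then 0 else hHInt.1.mk H y / b y with hudef
  have humeas : Measurable u := by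
    apply Measurable.ite (hbmeas (measurableSet_singleton 0)) measurable_const
    exact hmkMeas.div hbmeas
  -- f, g, M
  set f : EuclideanSpace ℝ (Fin n) → ℂ := fun y₁ => s t₁ t₂ x y₁ z₂ with hfdef
  set g : EuclideanSpace ℝ (Fin m) → ℂ :=
    fun y₂ => s t₁ t₂ x z₁ y₂ - s t₁ t₂ x z₁ z₂ with hgdef
  set M : ℝ := ((2 * n + 2) * (2 * m + 2) : ℝ) * C₀ *
    (lI ^ α * t₁ ^ (-(n : ℝ) - α)) * (lJ ^ β * t₂ ^ (-(m : ℝ) - β)) with hMdef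
  have hM0 : 0 ≤ M := by
    rw [hMdef]
    apply mul_nonneg
    apply mul_nonneg
    apply mul_nonneg
    · positivity
    · exact hC₀
    · exact mul_nonneg hrp1 hrp3
    · exact mul_nonneg hrp2 hrp4
  have hsdecomp : ∀ y : EuclideanSpace ℝ (Fin n) × EuclideanSpace ℝ (Fin m), y ∈ IJ →
      ‖s t₁ t₂ x y.1 y.2 - (f y.1 + g y.2)‖ ≤ M := by
    intro y hy
    rw [hIJdef, mem_prod] at hy
    have hb := double_diff_bound hα hβ hC₀ (s t₁ t₂ x) x.1 x.2 hlI hlJ hlt1 hlt2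
      (fun y₁ y₁' y₂ y₂' hc1 hc2 => hHol t₁ t₂ ht1pos ht2pos x y₁ y₁' y₂ y₂' hc1 hc2)
      hy.1 (mem_cube_self z₁ hlI.le) hy.2 (mem_cube_self z₂ hlJ.le)
    have heq : s t₁ t₂ x y.1 y.2 - (f y.1 + g y.2)
        = s t₁ t₂ x y.1 y.2 - s t₁ t₂ x y.1 z₂ - s t₁ t₂ x z₁ y.2 + s t₁ t₂ x z₁ z₂ := by
      rw [hfdef, hgdef]
      ring
    rw [heq, hMdef]
    exact hb
  -- u agrees with s where it matters
  have hu_eq : ∀ y : EuclideanSpace ℝ (Fin n) × EuclideanSpace ℝ (Fin m),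
      b y ≠ 0 → H y = hHInt.1.mk H y → u y = s t₁ t₂ x y.1 y.2 := by
    intro y hb0 hEq
    rw [hudef]
    simp only [if_neg hb0]
    rw [← hEq, hHdef]
    simp only
    rw [mul_div_assoc, div_self hb0, mul_one]
  -- bad set is null
  have hbadnull : volume {y : EuclideanSpace ℝ (Fin n) × EuclideanSpace ℝ (Fin m) |
      y ∈ Ω ∧ ¬ (‖u y - (f y.1 + g y.2)‖ ≤ M)} = 0 := by
    apply measure_mono_null _ (ae_iff.mp hHmk)
    intro y hy
    rcases hy with ⟨hyΩ, hybad⟩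
    simp only [mem_setOf_eq]
    intro hEq
    apply hybad
    rw [hu_eq y hyΩ hEq]
    exact hsdecomp y (hΩsub hyΩ)
  obtain ⟨N₀, hN₀sub, hN₀meas, hN₀null⟩ := exists_measurable_superset_of_null hbadnull
  set Ω' := Ω \ N₀ with hΩ'def
  have hΩ'meas : MeasurableSet Ω' := hΩmeas.diff hN₀meas
  have hΩ'sub : Ω' ⊆ (cube z₁ lI) ×ˢ (cube z₂ lJ) := fun y hy => hΩsub hy.1
  have hΩ'good : ∀ y ∈ Ω', ‖u y - (f y.1 + g y.2)‖ ≤ M := by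
    intro y hy
    by_contra hcon
    exact hy.2 (hN₀sub ⟨hy.1, hcon⟩)
  -- cubes have finite measure
  have hfinI : volume (cube z₁ lI) ≠ ⊤ := by
    have hsubball : cube z₁ lI ⊆ Metric.closedBall z₁ (n * lI) := by
      intro y hy
      rw [Metric.mem_closedBall, dist_eq_norm]
      exact norm_sub_le_of_cube hlI.le hy (mem_cube_self z₁ hlI.le)
    exact ne_top_of_le_ne_top
      (IsCompact.measure_ne_top (isCompact_closedBall z₁ (n * lI)))
      (measure_mono hsubball)
  have hfinJ : volume (cube z₂ lJ) ≠ ⊤ := by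
    have hsubball : cube z₂ lJ ⊆ Metric.closedBall z₂ (m * lJ) := by
      intro y hy
      rw [Metric.mem_closedBall, dist_eq_norm]
      exact norm_sub_le_of_cube hlJ.le hy (mem_cube_self z₂ hlJ.le)
    exact ne_top_of_le_ne_top
      (IsCompact.measure_ne_top (isCompact_closedBall z₂ (m * lJ)))
      (measure_mono hsubball)
  obtain ⟨c, d, hcmeas, hdmeas, hcd⟩ := exists_sep_approx Ω' hΩ'meas (cube z₁ lI) (cube z₂ lJ)
    hfinI hfinJ hΩ'sub u humeas f g M hΩ'good
  -- define k, hV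
  set k : EuclideanSpace ℝ (Fin n) × EuclideanSpace ℝ (Fin m) → ℂ :=
    fun y => (c y.1 + d y.2) * b y with hkdef
  have hkm : AEStronglyMeasurable k volume :=
    (((hcmeas.comp measurable_fst).add (hdmeas.comp measurable_snd)).mul hbmeas).aestronglyMeasurable
  set hV : EuclideanSpace ℝ (Fin n) × EuclideanSpace ℝ (Fin m) → ℂ :=
    fun y => H y - k y with hhVdef
  have hN₀ae : ∀ᵐ y : EuclideanSpace ℝ (Fin n) × EuclideanSpace ℝ (Fin m), y ∉ N₀ :=
    measure_eq_zero_iff_ae_notMem.mp hN₀null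
  have hhVbound : ∀ᵐ y : EuclideanSpace ℝ (Fin n) × EuclideanSpace ℝ (Fin m),
      ‖hV y‖ ≤ (3 * M) * ‖b y‖ := by
    filter_upwards [hcd, hHmk, hN₀ae] with y hy1 hy2 hy3
    by_cases hb0 : b y = 0
    · have h0 : hV y = 0 := by
        simp only [hhVdef, hHdef, hkdef, hb0, mul_zero, sub_zero]
      rw [h0, norm_zero, hb0, norm_zero, mul_zero]
    · have hyΩ : y ∈ Ω := hb0
      have hyΩ' : y ∈ Ω' := ⟨hyΩ, hy3⟩
      have hueq := hu_eq y hb0 hy2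
      have h5 : ‖s t₁ t₂ x y.1 y.2 - (c y.1 + d y.2)‖ ≤ 3 * M := by
        rw [← hueq]
        exact hy1 hyΩ'
      have hfact : hV y = (s t₁ t₂ x y.1 y.2 - (c y.1 + d y.2)) * b y := by
        simp only [hhVdef, hHdef, hkdef]
        ring
      rw [hfact, norm_mul]
      exact mul_le_mul_of_nonneg_right h5 (norm_nonneg _)
  have hhVm : AEStronglyMeasurable hV volume := hHInt.1.sub hkm
  have hhVInt : Integrable hV := Integrable.mono' (hbInt.norm.const_mul (3 * M)) hhVm hhVbound
  have hkInt : Integrable k := by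
    have hkeq : k = fun y => H y - hV y := by
      funext y
      rw [hhVdef]
      ring
    rw [hkeq]
    exact hHInt.sub hhVInt
  have hk0 : (∫ y, k y) = 0 :=
    integral_sep_mul_eq_zero c d hcmeas hdmeas b hbInt hcanb2 hcanb1 hkInt
  have hsplit : (∫ y, H y) = (∫ y, hV y) + ∫ y, k y := by
    rw [← integral_add hhVInt hkInt]
    apply integral_congr_ae
    filter_upwards with y
    rw [hhVdef]
    ring
  rw [hsplit, hk0, add_zero]
  have habnorm : (∫ y, ‖b y‖) ≤ 1 := by
    have : (fun y => ‖a y‖) =ᵐ[volume] fun y => ‖b y‖ := by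
      filter_upwards [hab] with y hy
      rw [hy]
    rw [← integral_congr_ae this]
    exact hnorm
  calc ‖∫ y, hV y‖ ≤ ∫ y, ‖hV y‖ := norm_integral_le_integral_norm _
    _ ≤ ∫ y, (3 * M) * ‖b y‖ :=
        integral_mono_ae hhVInt.norm ((hbInt.norm).const_mul (3 * M)) hhVbound
    _ = (3 * M) * ∫ y, ‖b y‖ := integral_const_mul _ _
    _ ≤ (3 * M) * 1 := by
        apply mul_le_mul_of_nonneg_left habnorm
        linarith
    _ = (3 * (2 * n + 2) * (2 * m + 2) : ℝ) * C₀ * lI ^ α * lJ ^ β *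
        t₁ ^ (-(n : ℝ) - α) * t₂ ^ (-(m : ℝ) - β) := by
        rw [hMdef]
        push_cast
        ring
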